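/- If the beliefs Π are fully overlapping and the menu c : T → ℝ^S is incentive compatible, then c(t) = c(t') for all t, t' ∈ T; i.e. the menu consists of a single contract. -/
import Mathlib


noncomputable section

/-- Euclidean inner product on ℝ^S. -/
def dotp {S : Type*} [Fintype S] (x y : S → ℝ) : ℝ := ∑ s, x s * y s

/-- A set `A ⊆ ℝ^S` has full dimension if the only vector orthogonal to all of `A` is `0`. -/
def FullDim {S : Type*} [Fintype S] (A : Set (S → ℝ)) : Prop :=
  ∀ x : S → ℝ, (∀ a ∈ A, dotp a x = 0) → x = 0

theorem stmt_7 {S T : Type*} [Fintype S] [Fintype T] [Nonempty S] [Nonempty T]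
    (P : T → Set (S → ℝ))
    (hne : ∀ t, (P t).Nonempty) (hcl : ∀ t, IsClosed (P t))
    (hcv : ∀ t, Convex ℝ (P t)) (hsub : ∀ t, P t ⊆ stdSimplex ℝ S)
    (hov : ∀ t t' : T, FullDim (P t ∩ P t'))
    (c : T → (S → ℝ))
    (hic : ∀ t s : T, ∀ π ∈ P t, dotp π (c t) ≤ dotp π (c s)) :
    ∀ t t' : T, c t = c t' := by
  intro t t'
  have h := hov t t' (c t - c t') ?_
  · have := sub_eq_zero.mp h
    exact this
  · rintro a ⟨ha, ha'⟩
    have h1 := hic t t' a ha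
    have h2 := hic t' t a ha'
    have : dotp a (c t) = dotp a (c t') := le_antisymm h1 h2
    simp only [dotp, Pi.sub_apply, mul_sub, Finset.sum_sub_distrib] at *
    linarith
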